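/- If a butterfly-free graph G contains a (4k+1)-span-wheel, where k ≥ 0 is an integer, then G contains S_{k+1, k+1, k+1} (as an induced subgraph). -/

import Mathlib

open SimpleGraph

variable {V : Type} [Fintype V] [DecidableEq V]

/-- `p` is a chordless (induced) path in `G`: a path such that the only edges of `G`
between its vertices are the edges of the path. -/
def IsInducedPathW (G : SimpleGraph V) {a b : V} (p : G.Walk a b) : Prop :=
  p.IsPath ∧ ∀ u v : V, u ∈ p.support → v ∈ p.support → G.Adj u v → p.toSubgraph.Adj u v

/-- A hole of length `n` in `G`: an induced (chordless) cycle of length `n ≥ 4`,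
given by an injection of `ZMod n` into `G` whose adjacencies are exactly the consecutive ones. -/
def IsHoleEmb (G : SimpleGraph V) (n : ℕ) (f : ZMod n → V) : Prop :=
  4 ≤ n ∧ Function.Injective f ∧
    ∀ i j : ZMod n, G.Adj (f i) (f j) ↔ (j = i + 1 ∨ i = j + 1)

/-- `G` contains an even hole (induced even cycle of length at least 4). -/
def ContainsEvenHole (G : SimpleGraph V) : Prop :=
  ∃ (n : ℕ) (f : ZMod n → V), IsHoleEmb G n f ∧ Even n

/-- `G` contains a square (hole of length 4). -/
def ContainsSquare (G : SimpleGraph V) : Prop :=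
  ∃ f : ZMod 4 → V, IsHoleEmb G 4 f

/-- `G` contains a theta as an induced subgraph: three internally vertex-disjoint chordless
paths from `a` to `b`, each of length at least 2, with no edges between the paths other than
those incident to `a` or `b` specified by the paths. -/
def ContainsTheta (G : SimpleGraph V) : Prop :=
  ∃ (a b : V) (p₁ p₂ p₃ : G.Walk a b),
    (IsInducedPathW G p₁ ∧ IsInducedPathW G p₂ ∧ IsInducedPathW G p₃) ∧
    (2 ≤ p₁.length ∧ 2 ≤ p₂.length ∧ 2 ≤ p₃.length) ∧
    (∀ w : V, ((w ∈ p₁.support ∧ w ∈ p₂.support) ∨ (w ∈ p₁.support ∧ w ∈ p₃.support) ∨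
          (w ∈ p₂.support ∧ w ∈ p₃.support)) → (w = a ∨ w = b)) ∧
    (∀ u w : V, u ≠ a → u ≠ b → w ≠ a → w ≠ b →
      ((u ∈ p₁.support ∧ w ∈ p₂.support) ∨ (u ∈ p₁.support ∧ w ∈ p₃.support) ∨
       (u ∈ p₂.support ∧ w ∈ p₃.support)) → ¬G.Adj u w)

/-- `G` contains a prism as an induced subgraph. -/
def ContainsPrism (G : SimpleGraph V) : Prop :=
  ∃ (a₁ b₁ a₂ b₂ a₃ b₃ : V) (p₁ : G.Walk a₁ b₁) (p₂ : G.Walk a₂ b₂) (p₃ : G.Walk a₃ b₃),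
    (IsInducedPathW G p₁ ∧ IsInducedPathW G p₂ ∧ IsInducedPathW G p₃) ∧
    (1 ≤ p₁.length ∧ 1 ≤ p₂.length ∧ 1 ≤ p₃.length) ∧
    (G.Adj a₁ a₂ ∧ G.Adj a₂ a₃ ∧ G.Adj a₁ a₃) ∧
    (G.Adj b₁ b₂ ∧ G.Adj b₂ b₃ ∧ G.Adj b₁ b₃) ∧
    (∀ w : V, ¬(w ∈ p₁.support ∧ w ∈ p₂.support) ∧ ¬(w ∈ p₁.support ∧ w ∈ p₃.support) ∧
          ¬(w ∈ p₂.support ∧ w ∈ p₃.support)) ∧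
    (∀ u w : V, u ∈ p₁.support → w ∈ p₂.support → G.Adj u w →
      (u = a₁ ∧ w = a₂) ∨ (u = b₁ ∧ w = b₂)) ∧
    (∀ u w : V, u ∈ p₁.support → w ∈ p₃.support → G.Adj u w →
      (u = a₁ ∧ w = a₃) ∨ (u = b₁ ∧ w = b₃)) ∧
    (∀ u w : V, u ∈ p₂.support → w ∈ p₃.support → G.Adj u w →
      (u = a₂ ∧ w = a₃) ∨ (u = b₂ ∧ w = b₃))

/-- `G` contains a pyramid as an induced subgraph. -/
def ContainsPyramid (G : SimpleGraph V) : Prop :=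
  ∃ (a b₁ b₂ b₃ : V) (p₁ : G.Walk a b₁) (p₂ : G.Walk a b₂) (p₃ : G.Walk a b₃),
    (IsInducedPathW G p₁ ∧ IsInducedPathW G p₂ ∧ IsInducedPathW G p₃) ∧
    (1 ≤ p₁.length ∧ 1 ≤ p₂.length ∧ 1 ≤ p₃.length) ∧
    ((2 ≤ p₁.length ∧ 2 ≤ p₂.length) ∨ (2 ≤ p₁.length ∧ 2 ≤ p₃.length) ∨
     (2 ≤ p₂.length ∧ 2 ≤ p₃.length)) ∧
    (G.Adj b₁ b₂ ∧ G.Adj b₂ b₃ ∧ G.Adj b₁ b₃) ∧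
    (∀ w : V, ((w ∈ p₁.support ∧ w ∈ p₂.support) ∨ (w ∈ p₁.support ∧ w ∈ p₃.support) ∨
          (w ∈ p₂.support ∧ w ∈ p₃.support)) → w = a) ∧
    (∀ u w : V, u ∈ p₁.support → w ∈ p₂.support → u ≠ a → w ≠ a → G.Adj u w →
      u = b₁ ∧ w = b₂) ∧
    (∀ u w : V, u ∈ p₁.support → w ∈ p₃.support → u ≠ a → w ≠ a → G.Adj u w →
      u = b₁ ∧ w = b₃) ∧
    (∀ u w : V, u ∈ p₂.support → w ∈ p₃.support → u ≠ a → w ≠ a → G.Adj u w →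
      u = b₂ ∧ w = b₃)

/-- `G` contains the cube as an induced subgraph: a hole of length 6 together with
two non-adjacent vertices `u, v` outside it, `u` adjacent to the even positions and
`v` adjacent to the odd positions. -/
def ContainsCube (G : SimpleGraph V) : Prop :=
  ∃ (f : ZMod 6 → V) (u v : V), IsHoleEmb G 6 f ∧
    u ∉ Set.range f ∧ v ∉ Set.range f ∧ ¬G.Adj u v ∧
    (∀ m : ZMod 6, G.Adj u (f m) ↔ (m = 0 ∨ m = 2 ∨ m = 4)) ∧
    (∀ m : ZMod 6, G.Adj v (f m) ↔ (m = 1 ∨ m = 3 ∨ m = 5))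

/-- `G` contains an even wheel: a hole plus a vertex outside it having at least 3 and
an even number of neighbors on the hole. -/
def ContainsEvenWheel (G : SimpleGraph V) : Prop :=
  ∃ (n : ℕ) (f : ZMod n → V) (u : V), IsHoleEmb G n f ∧ u ∉ Set.range f ∧
    3 ≤ {m : ZMod n | G.Adj u (f m)}.ncard ∧ Even {m : ZMod n | G.Adj u (f m)}.ncard

/-- `G` contains a butterfly: a wheel `(H,v)` with `N_H(v) = {a,b,c,d}`,
`ab, cd ∈ E(G)` and `bc, da ∉ E(G)`. -/
def ContainsButterfly (G : SimpleGraph V) : Prop :=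
  ∃ (n : ℕ) (f : ZMod n → V) (u : V), IsHoleEmb G n f ∧ u ∉ Set.range f ∧
    ∃ i j : ZMod n, i ≠ j ∧ i ≠ j + 1 ∧ i + 1 ≠ j ∧ i + 1 ≠ j + 1 ∧
      ¬G.Adj (f (i + 1)) (f j) ∧ ¬G.Adj (f (j + 1)) (f i) ∧
      (∀ m : ZMod n, G.Adj u (f m) ↔ (m = i ∨ m = i + 1 ∨ m = j ∨ m = j + 1))

/-- A 2-wheel in `G`: a hole `f` together with two distinct centers `u, v` outside the hole,
each having at least three neighbors on the hole. -/
def Is2WheelCfg (G : SimpleGraph V) (n : ℕ) (f : ZMod n → V) (u v : V) : Prop :=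
  IsHoleEmb G n f ∧ u ≠ v ∧ u ∉ Set.range f ∧ v ∉ Set.range f ∧
  3 ≤ {m : ZMod n | G.Adj u (f m)}.ncard ∧ 3 ≤ {m : ZMod n | G.Adj v (f m)}.ncard

/-- The 2-wheel `(f, {u,v})` is nested: the hole splits at `f i` and `f (i+d)` into two arcs,
with all neighbors of `u` on one arc and all neighbors of `v` on the other. -/
def NestedCfg (G : SimpleGraph V) (n : ℕ) (f : ZMod n → V) (u v : V) : Prop :=
  ∃ (i : ZMod n) (d : ℕ), 1 ≤ d ∧ d < n ∧
    (∀ m : ZMod n, G.Adj u (f m) → ∃ e : ℕ, e ≤ d ∧ m = i + (e : ZMod n)) ∧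
    (∀ m : ZMod n, G.Adj v (f m) → ∃ e : ℕ, e ≤ n - d ∧ m = i + (d : ZMod n) + (e : ZMod n))

/-- The 2-wheel `(f, {u,v})` is the cube. -/
def CubeCfg (G : SimpleGraph V) (n : ℕ) (f : ZMod n → V) (u v : V) : Prop :=
  n = 6 ∧ ∃ i : ZMod n,
    (∀ m : ZMod n, G.Adj u (f m) ↔ (m = i ∨ m = i + 2 ∨ m = i + 4)) ∧
    (∀ m : ZMod n, G.Adj v (f m) ↔ (m = i + 1 ∨ m = i + 3 ∨ m = i + 5))

/-- The 2-wheel `(f, {u,v})` is a cousin wheel: `N_H(u) = {h₁,h₂,h₃}` and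
`N_H(v) = {h₂,h₃,h₄}` for four consecutive vertices of the hole (or with `u, v` swapped). -/
def CousinCfg (G : SimpleGraph V) (n : ℕ) (f : ZMod n → V) (u v : V) : Prop :=
  (∃ i : ZMod n,
    (∀ m : ZMod n, G.Adj u (f m) ↔ (m = i ∨ m = i + 1 ∨ m = i + 2)) ∧
    (∀ m : ZMod n, G.Adj v (f m) ↔ (m = i + 1 ∨ m = i + 2 ∨ m = i + 3))) ∨
  (∃ i : ZMod n,
    (∀ m : ZMod n, G.Adj v (f m) ↔ (m = i ∨ m = i + 1 ∨ m = i + 2)) ∧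
    (∀ m : ZMod n, G.Adj u (f m) ↔ (m = i + 1 ∨ m = i + 2 ∨ m = i + 3)))

/-- A `u`-sector of the hole `f`: a subpath from `f i` to `f (i+d)` (`1 ≤ d < n`)
whose two ends are adjacent to `u` and whose internal vertices are not. -/
def IsSector (G : SimpleGraph V) (n : ℕ) (f : ZMod n → V) (u : V) (i : ZMod n) (d : ℕ) : Prop :=
  1 ≤ d ∧ d < n ∧ G.Adj u (f i) ∧ G.Adj u (f (i + (d : ZMod n))) ∧
    ∀ m : ℕ, 0 < m → m < d → ¬G.Adj u (f (i + (m : ZMod n)))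

/-- The class 𝒞: (theta, prism, pyramid, butterfly)-free graphs in which every 2-wheel
with non-adjacent centers is a nested wheel or a cousin wheel. -/
def InClassC (G : SimpleGraph V) : Prop :=
  ¬ContainsTheta G ∧ ¬ContainsPrism G ∧ ¬ContainsPyramid G ∧ ¬ContainsButterfly G ∧
  ∀ (n : ℕ) (f : ZMod n → V) (u v : V), Is2WheelCfg G n f u v → ¬G.Adj u v →
    (NestedCfg G n f u v ∨ CousinCfg G n f u v)

/-- `G` contains `S_{k,k,k}` as an induced subgraph: a root `r` and three legs of `k` edges
each, with no other adjacencies among these vertices. -/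
def ContainsSpider (G : SimpleGraph V) (k : ℕ) : Prop :=
  ∃ (r : V) (f : Fin 3 → Fin k → V),
    (∀ (j : Fin 3) (m : Fin k), f j m ≠ r) ∧
    (∀ (j₁ : Fin 3) (m₁ : Fin k) (j₂ : Fin 3) (m₂ : Fin k),
      f j₁ m₁ = f j₂ m₂ → j₁ = j₂ ∧ m₁ = m₂) ∧
    (∀ (j : Fin 3) (m : Fin k), G.Adj r (f j m) ↔ (m : ℕ) = 0) ∧
    (∀ (j₁ : Fin 3) (m₁ : Fin k) (j₂ : Fin 3) (m₂ : Fin k),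
      G.Adj (f j₁ m₁) (f j₂ m₂) ↔
        (j₁ = j₂ ∧ ((m₁ : ℕ) + 1 = (m₂ : ℕ) ∨ (m₂ : ℕ) + 1 = (m₁ : ℕ))))

/-- A `k`-span-wheel in `G`: a hole `f` of length `n`, with `x = f 0` and `y = f p`
non-adjacent, the two paths `P_A = f 0, f 1, …, f p` and `P_B = f 0, f (n-1), …, f p`,
and centers `c 0, …, c (k-1)` outside the hole such that `{c i} ∪ {x,y}` is independent,
every center has at least three neighbors on the hole and neighbors in the interiors of
both `P_A` and `P_B`, and the neighbors of the centers appear along both `P_A` and `P_B`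
(from `x` to `y`) in the order of the centers. -/
def IsSpanWheel (G : SimpleGraph V) (k n p : ℕ) (f : ZMod n → V) (c : Fin k → V) : Prop :=
  IsHoleEmb G n f ∧
  2 ≤ p ∧ p ≤ n - 2 ∧
  ¬G.Adj (f 0) (f (p : ZMod n)) ∧
  Function.Injective c ∧
  (∀ i : Fin k, c i ∉ Set.range f) ∧
  (∀ i j : Fin k, i ≠ j → ¬G.Adj (c i) (c j)) ∧
  (∀ i : Fin k, ¬G.Adj (c i) (f 0)) ∧
  (∀ i : Fin k, ¬G.Adj (c i) (f (p : ZMod n))) ∧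
  (∀ i : Fin k, 3 ≤ {m : ZMod n | G.Adj (c i) (f m)}.ncard) ∧
  (∀ i : Fin k, ∃ a : ℕ, 0 < a ∧ a < p ∧ G.Adj (c i) (f (a : ZMod n))) ∧
  (∀ i : Fin k, ∃ b : ℕ, p < b ∧ b < n ∧ G.Adj (c i) (f (b : ZMod n))) ∧
  (∀ i j : Fin k, i < j → ∀ a₁ a₂ : ℕ, a₁ ≤ p → a₂ ≤ p →
    G.Adj (c i) (f (a₁ : ZMod n)) → G.Adj (c j) (f (a₂ : ZMod n)) → a₁ ≤ a₂) ∧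
  (∀ i j : Fin k, i < j → ∀ b₁ b₂ : ℕ, p ≤ b₁ → b₁ ≤ n → p ≤ b₂ → b₂ ≤ n →
    G.Adj (c i) (f (b₁ : ZMod n)) → G.Adj (c j) (f (b₂ : ZMod n)) → b₂ ≤ b₁)

/-- `X` separates `s` from `t` in `G`: neither is in `X` and every walk from `s` to `t`
meets `X`. -/
def Separates (G : SimpleGraph V) (X : Set V) (s t : V) : Prop :=
  s ∉ X ∧ t ∉ X ∧ ∀ p : G.Walk s t, ∃ w ∈ p.support, w ∈ X

/-- `X` is a minimal separator of `G`: for some pair `s, t` it is an inclusion-wise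
minimal `st`-separator. -/
def MinSeparator (G : SimpleGraph V) (X : Set V) : Prop :=
  ∃ s t : V, Separates G X s t ∧ ∀ Y ⊆ X, Separates G Y s t → Y = X

/-- `A` is a connected component of `G ∖ C` that is full to `C`. -/
def IsFullComponent (G : SimpleGraph V) (C A : Set V) : Prop :=
  A.Nonempty ∧ Disjoint A C ∧ (G.induce A).Connected ∧
  (∀ a ∈ A, ∀ w : V, G.Adj a w → w ∈ A ∪ C) ∧
  (∀ x ∈ C, ∃ a ∈ A, G.Adj x a)

/-- A tree decomposition of `G` with tree `T` and bags `B`. -/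
def IsTreeDecomp (G : SimpleGraph V) {ι : Type} (T : SimpleGraph ι) (B : ι → Finset V) : Prop :=
  T.IsTree ∧
  (∀ v : V, ∃ i, v ∈ B i) ∧
  (∀ u v : V, G.Adj u v → ∃ i, u ∈ B i ∧ v ∈ B i) ∧
  (∀ (v : V) (i j : ι), v ∈ B i → v ∈ B j →
    ∀ (p : T.Walk i j), p.IsPath → ∀ x ∈ p.support, v ∈ B x)

/-- The treewidth of a finite graph: the least `w` such that `G` has a tree decomposition
all of whose bags have size at most `w + 1`. -/
noncomputable def treewidth (G : SimpleGraph V) : ℕ :=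
  sInf {w : ℕ | ∃ (m : ℕ) (T : SimpleGraph (Fin m)) (B : Fin m → Finset V),
    IsTreeDecomp G T B ∧ ∀ i, (B i).card ≤ w + 1}

/-- A graph is chordal iff it has no hole. -/
def IsChordal (G : SimpleGraph V) : Prop :=
  ¬∃ (n : ℕ) (f : ZMod n → V), IsHoleEmb G n f

/-- `H` is obtained from `G` by a minimal fill-in (minimal chordal completion). -/
def IsMinimalChordalCompletion (G H : SimpleGraph V) : Prop :=
  G ≤ H ∧ IsChordal H ∧ ∀ H' : SimpleGraph V, G ≤ H' → H' ≤ H → IsChordal H' → H' = H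

/-- `Ω` is a potential maximal clique of `G`: a maximal clique of some minimal chordal
completion of `G`. -/
def IsPMC (G : SimpleGraph V) (Ω : Set V) : Prop :=
  ∃ H : SimpleGraph V, IsMinimalChordalCompletion G H ∧ H.IsClique Ω ∧
    ∀ Ω' : Set V, H.IsClique Ω' → Ω ⊆ Ω' → Ω' = Ω

/-- `n` satisfies the Ramsey property for `(t, k)`: every graph on `n` vertices has a
clique of size `t` or an independent set of size `k`. -/
def RamseyProp (n t k : ℕ) : Prop :=
  ∀ G : SimpleGraph (Fin n),
    (∃ S : Finset (Fin n), G.IsNClique t S) ∨ (∃ S : Finset (Fin n), Gᶜ.IsNClique k S)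

/-- The Ramsey number `R(t, k)`. -/
noncomputable def ramseyNumber (t k : ℕ) : ℕ := sInf {n : ℕ | RamseyProp n t k}



set_option linter.unusedSectionVars false
set_option linter.unreachableTactic false
set_option linter.unusedTactic false
set_option maxHeartbeats 1600000

private lemma castEq_iff {n : ℕ} (hn : 0 < n) {q r : ℤ} (h1 : q - r < (n:ℤ)) (h2 : r - q < (n:ℤ)) :
    ((q : ZMod n) = (r : ZMod n)) ↔ q = r := by
  constructor
  · intro h
    obtain ⟨c, hc⟩ := ((ZMod.intCast_eq_intCast_iff _ _ _).1 h).dvd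
    have hn' : (0:ℤ) < n := by exact_mod_cast hn
    have h3 : (n:ℤ) * c < n * 1 := by linarith
    have h4 : (n:ℤ) * (-c) < n * 1 := by linarith
    have hc1 : c < 1 := lt_of_mul_lt_mul_left h3 (le_of_lt hn')
    have hc2 : -c < 1 := lt_of_mul_lt_mul_left h4 (le_of_lt hn')
    have : c = 0 := by omega
    rw [this, mul_zero] at hc
    omega
  · rintro rfl; rfl

private lemma holeAdj_int {G : SimpleGraph V} {n : ℕ} {f : ZMod n → V} (hole : IsHoleEmb G n f)
    {q r : ℤ} (h1 : q - r ≤ (n:ℤ) - 2) (h2 : r - q ≤ (n:ℤ) - 2) :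
    (G.Adj (f (q : ZMod n)) (f (r : ZMod n))) ↔ (r = q + 1 ∨ q = r + 1) := by
  obtain ⟨hn4, hinj, hadj⟩ := hole
  have hn : 0 < n := by omega
  rw [hadj]
  have e1 : ((q : ZMod n) + 1) = ((q + 1 : ℤ) : ZMod n) := by push_cast; ring
  have e2 : ((r : ZMod n) + 1) = ((r + 1 : ℤ) : ZMod n) := by push_cast; ring
  rw [e1, e2, castEq_iff hn (by omega) (by omega), castEq_iff hn (by omega) (by omega)]

private lemma holeEq_int {G : SimpleGraph V} {n : ℕ} {f : ZMod n → V} (hole : IsHoleEmb G n f)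
    {q r : ℤ} (h1 : q - r < (n:ℤ)) (h2 : r - q < (n:ℤ)) :
    f (q : ZMod n) = f (r : ZMod n) ↔ q = r := by
  constructor
  · intro h
    exact (castEq_iff (by omega) h1 h2).1 (hole.2.1 h)
  · rintro rfl; rfl

private lemma shapeI {G : SimpleGraph V} {n k : ℕ} {f : ZMod n → V} (hole : IsHoleEmb G n f)
    {v : V} (hv : v ∉ Set.range f)
    (pos : Fin 3 → ℕ → ℤ) (lo : ℤ)
    (hmono : ∀ j : Fin 3, (∀ m₁ m₂ : ℕ, pos j m₁ - pos j m₂ = (m₁:ℤ) - m₂) ∨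
                          (∀ m₁ m₂ : ℕ, pos j m₁ - pos j m₂ = (m₂:ℤ) - m₁))
    (hwin : ∀ (j : Fin 3) (m : ℕ), m ≤ k → lo ≤ pos j m ∧ pos j m ≤ lo + ((n:ℤ) - 2))
    (hsep : ∀ j₁ j₂ : Fin 3, j₁ ≠ j₂ → ∀ m₁ m₂ : ℕ, m₁ ≤ k → m₂ ≤ k →
      2 ≤ pos j₁ m₁ - pos j₂ m₂ ∨ pos j₁ m₁ - pos j₂ m₂ ≤ -2)
    (hadj0 : ∀ j, G.Adj v (f (pos j 0 : ZMod n)))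
    (hadj1 : ∀ (j : Fin 3) (m : ℕ), 1 ≤ m → m ≤ k → ¬G.Adj v (f (pos j m : ZMod n))) :
    ContainsSpider G (k+1) := by
  have hn4 := hole.1
  have hn : 0 < n := by omega
  refine ⟨v, fun j m => f (pos j (m : ℕ) : ZMod n), ?_, ?_, ?_, ?_⟩
  · intro j m h
    exact hv ⟨_, h⟩
  · intro j₁ m₁ j₂ m₂ h
    have hm₁ : (m₁ : ℕ) ≤ k := by omega
    have hm₂ : (m₂ : ℕ) ≤ k := by omega
    have hw₁ := hwin j₁ _ hm₁
    have hw₂ := hwin j₂ _ hm₂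
    have heq : pos j₁ (m₁:ℕ) = pos j₂ (m₂:ℕ) :=
      (holeEq_int hole (by omega) (by omega)).1 h
    by_cases hj : j₁ = j₂
    · subst hj
      refine ⟨rfl, ?_⟩
      rcases hmono j₁ with hm | hm <;> · have := hm (m₁:ℕ) (m₂:ℕ); omega
    · exfalso
      rcases hsep j₁ j₂ hj _ _ hm₁ hm₂ with h' | h' <;> omega
  · intro j m
    have hm : (m : ℕ) ≤ k := by omega
    constructor
    · intro h
      by_contra h0
      exact hadj1 j (m:ℕ) (by omega) hm h
    · intro h0
      show G.Adj v (f (pos j (m:ℕ) : ZMod n))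
      rw [h0]
      exact hadj0 j
  · intro j₁ m₁ j₂ m₂
    have hm₁ : (m₁ : ℕ) ≤ k := by omega
    have hm₂ : (m₂ : ℕ) ≤ k := by omega
    have hw₁ := hwin j₁ _ hm₁
    have hw₂ := hwin j₂ _ hm₂
    rw [holeAdj_int hole (by omega) (by omega)]
    by_cases hj : j₁ = j₂
    · subst hj
      simp only [eq_self_iff_true, true_and]
      rcases hmono j₁ with hm | hm <;> · have := hm (m₁:ℕ) (m₂:ℕ); omega
    · constructor
      · intro h
        exfalso
        rcases hsep j₁ j₂ hj _ _ hm₁ hm₂ with h' | h' <;> omega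
      · rintro ⟨h, -⟩
        exact absurd h hj


private lemma shapeII {G : SimpleGraph V} {n k : ℕ} {f : ZMod n → V} (hole : IsHoleEmb G n f)
    {v : V} (hv : v ∉ Set.range f)
    (t : ℤ) (pos2 : ℕ → ℤ) (lo : ℤ)
    (hmono2 : (∀ m₁ m₂ : ℕ, pos2 m₁ - pos2 m₂ = (m₁:ℤ) - m₂) ∨
              (∀ m₁ m₂ : ℕ, pos2 m₁ - pos2 m₂ = (m₂:ℤ) - m₁))
    (hwin01 : lo ≤ t - 1 - k ∧ t + 1 + k ≤ lo + ((n:ℤ) - 2))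
    (hwin2 : ∀ m : ℕ, 1 ≤ m → m ≤ k → lo ≤ pos2 m ∧ pos2 m ≤ lo + ((n:ℤ) - 2))
    (hsep0 : ∀ m₁ m₂ : ℕ, m₁ ≤ k → 1 ≤ m₂ → m₂ ≤ k →
        2 ≤ pos2 m₂ - (t + 1 + m₁) ∨ pos2 m₂ - (t + 1 + m₁) ≤ -2)
    (hsep1 : ∀ m₁ m₂ : ℕ, m₁ ≤ k → 1 ≤ m₂ → m₂ ≤ k →
        2 ≤ pos2 m₂ - (t - 1 - m₁) ∨ pos2 m₂ - (t - 1 - m₁) ≤ -2)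
    (hsepr : ∀ m : ℕ, 1 ≤ m → m ≤ k → 2 ≤ pos2 m - t ∨ pos2 m - t ≤ -2)
    (hvt : G.Adj v (f (t : ZMod n)))
    (hv0 : ∀ m : ℕ, m ≤ k → ¬G.Adj v (f ((t + 1 + m : ℤ) : ZMod n)))
    (hv1 : ∀ m : ℕ, m ≤ k → ¬G.Adj v (f ((t - 1 - m : ℤ) : ZMod n)))
    (hv2 : 1 ≤ k → G.Adj v (f (pos2 1 : ZMod n)))
    (hv2' : ∀ m : ℕ, 2 ≤ m → m ≤ k → ¬G.Adj v (f (pos2 m : ZMod n))) :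
    ContainsSpider G (k+1) := by
  have hn4 := hole.1
  have hn : 0 < n := by omega
  -- the three legs
  set g : Fin 3 → Fin (k+1) → V := fun j m =>
    if j = 0 then f ((t + 1 + (m:ℕ) : ℤ) : ZMod n)
    else if j = 1 then f ((t - 1 - (m:ℕ) : ℤ) : ZMod n)
    else if (m:ℕ) = 0 then v else f (pos2 (m:ℕ) : ZMod n) with hg
  have hg0 : ∀ m : Fin (k+1), g 0 m = f ((t + 1 + (m:ℕ) : ℤ) : ZMod n) := by
    intro m; simp [hg]
  have hg1 : ∀ m : Fin (k+1), g 1 m = f ((t - 1 - (m:ℕ) : ℤ) : ZMod n) := by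
    intro m; simp [hg]
  have hg2 : ∀ m : Fin (k+1), (m:ℕ) ≠ 0 → g 2 m = f (pos2 (m:ℕ) : ZMod n) := by
    intro m hm; have h' : m ≠ 0 := fun h => hm (by simp [h]); simp [hg, hm, h']
  have hg20 : ∀ m : Fin (k+1), (m:ℕ) = 0 → g 2 m = v := by
    intro m hm; have h' : m = 0 := Fin.ext hm; simp [hg, h']
  refine ⟨f (t : ZMod n), g, ?_, ?_, ?_, ?_⟩
  · -- legs avoid root
    intro j m h
    have hm : (m:ℕ) ≤ k := by omega
    have hj3 : j = 0 ∨ j = 1 ∨ j = 2 := by omega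
    rcases hj3 with rfl | rfl | rfl
    · rw [hg0] at h
      have := (holeEq_int hole (by omega) (by omega)).1 h
      omega
    · rw [hg1] at h
      have := (holeEq_int hole (by omega) (by omega)).1 h
      omega
    · by_cases hm0 : (m:ℕ) = 0
      · rw [hg20 m hm0] at h
        exact hv ⟨_, h.symm⟩
      · rw [hg2 m hm0] at h
        have hw := hwin2 (m:ℕ) (by omega) hm
        have heq := (holeEq_int hole (by omega) (by omega)).1 h
        rcases hsepr (m:ℕ) (by omega) hm with h' | h' <;> omega
  · -- injectivity
    intro j₁ m₁ j₂ m₂ h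
    have hm₁ : (m₁:ℕ) ≤ k := by omega
    have hm₂ : (m₂:ℕ) ≤ k := by omega
    have hj₁ : j₁ = 0 ∨ j₁ = 1 ∨ j₁ = 2 := by omega
    have hj₂ : j₂ = 0 ∨ j₂ = 1 ∨ j₂ = 2 := by omega
    have hvne : ∀ (q : ℤ), f (q : ZMod n) ≠ v := fun q hq => hv ⟨_, hq⟩
    rcases hj₁ with rfl | rfl | rfl <;> rcases hj₂ with rfl | rfl | rfl
    · rw [hg0, hg0] at h
      have := (holeEq_int hole (by omega) (by omega)).1 h
      exact ⟨rfl, by omega⟩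
    · rw [hg0, hg1] at h
      have := (holeEq_int hole (by omega) (by omega)).1 h
      exact absurd (by omega : (2:ℤ) + m₁ + m₂ = 0) (by omega)
    · by_cases hm0 : (m₂:ℕ) = 0
      · rw [hg0, hg20 m₂ hm0] at h
        exact absurd h (hvne _)
      · rw [hg0, hg2 m₂ hm0] at h
        have hw := hwin2 (m₂:ℕ) (by omega) hm₂
        have := (holeEq_int hole (by omega) (by omega)).1 h
        rcases hsep0 (m₁:ℕ) (m₂:ℕ) hm₁ (by omega) hm₂ with h' | h' <;> omega
    · rw [hg1, hg0] at h
      have := (holeEq_int hole (by omega) (by omega)).1 h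
      exact absurd (by omega : (2:ℤ) + m₂ + m₁ = 0) (by omega)
    · rw [hg1, hg1] at h
      have := (holeEq_int hole (by omega) (by omega)).1 h
      exact ⟨rfl, by omega⟩
    · by_cases hm0 : (m₂:ℕ) = 0
      · rw [hg1, hg20 m₂ hm0] at h
        exact absurd h (hvne _)
      · rw [hg1, hg2 m₂ hm0] at h
        have hw := hwin2 (m₂:ℕ) (by omega) hm₂
        have := (holeEq_int hole (by omega) (by omega)).1 h
        rcases hsep1 (m₁:ℕ) (m₂:ℕ) hm₁ (by omega) hm₂ with h' | h' <;> omega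
    · by_cases hm0 : (m₁:ℕ) = 0
      · rw [hg0, hg20 m₁ hm0] at h
        exact absurd h.symm (hvne _)
      · rw [hg0, hg2 m₁ hm0] at h
        have hw := hwin2 (m₁:ℕ) (by omega) hm₁
        have := (holeEq_int hole (by omega) (by omega)).1 h
        rcases hsep0 (m₂:ℕ) (m₁:ℕ) hm₂ (by omega) hm₁ with h' | h' <;> omega
    · by_cases hm0 : (m₁:ℕ) = 0
      · rw [hg1, hg20 m₁ hm0] at h
        exact absurd h.symm (hvne _)
      · rw [hg1, hg2 m₁ hm0] at h
        have hw := hwin2 (m₁:ℕ) (by omega) hm₁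
        have := (holeEq_int hole (by omega) (by omega)).1 h
        rcases hsep1 (m₂:ℕ) (m₁:ℕ) hm₂ (by omega) hm₁ with h' | h' <;> omega
    · by_cases hm0 : (m₁:ℕ) = 0 <;> by_cases hm0' : (m₂:ℕ) = 0
      · exact ⟨rfl, by omega⟩
      · rw [hg20 m₁ hm0, hg2 m₂ hm0'] at h
        exact absurd h.symm (hvne _)
      · rw [hg2 m₁ hm0, hg20 m₂ hm0'] at h
        exact absurd h (hvne _)
      · rw [hg2 m₁ hm0, hg2 m₂ hm0'] at h
        have hw₁ := hwin2 (m₁:ℕ) (by omega) hm₁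
        have hw₂ := hwin2 (m₂:ℕ) (by omega) hm₂
        have heq := (holeEq_int hole (by omega) (by omega)).1 h
        refine ⟨rfl, ?_⟩
        rcases hmono2 with hm | hm <;> · have := hm (m₁:ℕ) (m₂:ℕ); omega
  · -- root adjacency
    intro j m
    have hm : (m:ℕ) ≤ k := by omega
    have hj3 : j = 0 ∨ j = 1 ∨ j = 2 := by omega
    rcases hj3 with rfl | rfl | rfl
    · rw [hg0, holeAdj_int hole (by omega) (by omega)]
      omega
    · rw [hg1, holeAdj_int hole (by omega) (by omega)]
      omega
    · by_cases hm0 : (m:ℕ) = 0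
      · rw [hg20 m hm0]
        simp only [hm0, iff_true]
        exact hvt.symm
      · rw [hg2 m hm0]
        have hw := hwin2 (m:ℕ) (by omega) hm
        rw [holeAdj_int hole (by omega) (by omega)]
        rcases hsepr (m:ℕ) (by omega) hm with h' | h' <;> omega
  · -- full adjacency structure
    intro j₁ m₁ j₂ m₂
    have hm₁ : (m₁:ℕ) ≤ k := by omega
    have hm₂ : (m₂:ℕ) ≤ k := by omega
    have hj₁ : j₁ = 0 ∨ j₁ = 1 ∨ j₁ = 2 := by omega
    have hj₂ : j₂ = 0 ∨ j₂ = 1 ∨ j₂ = 2 := by omega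
    rcases hj₁ with rfl | rfl | rfl <;> rcases hj₂ with rfl | rfl | rfl
    · rw [hg0, hg0, holeAdj_int hole (by omega) (by omega)]
      omega
    · rw [hg0, hg1, holeAdj_int hole (by omega) (by omega)]
      omega
    · by_cases hm0 : (m₂:ℕ) = 0
      · rw [hg0, hg20 m₂ hm0]
        constructor
        · intro h
          exact absurd h.symm (hv0 (m₁:ℕ) hm₁)
        · intro h
          exact absurd h.1 (by omega)
      · rw [hg0, hg2 m₂ hm0]
        have hw := hwin2 (m₂:ℕ) (by omega) hm₂
        rw [holeAdj_int hole (by omega) (by omega)]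
        rcases hsep0 (m₁:ℕ) (m₂:ℕ) hm₁ (by omega) hm₂ with h' | h' <;> omega
    · rw [hg1, hg0, holeAdj_int hole (by omega) (by omega)]
      omega
    · rw [hg1, hg1, holeAdj_int hole (by omega) (by omega)]
      omega
    · by_cases hm0 : (m₂:ℕ) = 0
      · rw [hg1, hg20 m₂ hm0]
        constructor
        · intro h
          exact absurd h.symm (hv1 (m₁:ℕ) hm₁)
        · intro h
          exact absurd h.1 (by omega)
      · rw [hg1, hg2 m₂ hm0]
        have hw := hwin2 (m₂:ℕ) (by omega) hm₂
        rw [holeAdj_int hole (by omega) (by omega)]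
        rcases hsep1 (m₁:ℕ) (m₂:ℕ) hm₁ (by omega) hm₂ with h' | h' <;> omega
    · by_cases hm0 : (m₁:ℕ) = 0
      · rw [hg20 m₁ hm0, hg0]
        constructor
        · intro h
          exact absurd h (hv0 (m₂:ℕ) hm₂)
        · intro h
          exact absurd h.1 (by omega)
      · rw [hg2 m₁ hm0, hg0]
        have hw := hwin2 (m₁:ℕ) (by omega) hm₁
        rw [holeAdj_int hole (by omega) (by omega)]
        rcases hsep0 (m₂:ℕ) (m₁:ℕ) hm₂ (by omega) hm₁ with h' | h' <;> omega
    · by_cases hm0 : (m₁:ℕ) = 0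
      · rw [hg20 m₁ hm0, hg1]
        constructor
        · intro h
          exact absurd h (hv1 (m₂:ℕ) hm₂)
        · intro h
          exact absurd h.1 (by omega)
      · rw [hg2 m₁ hm0, hg1]
        have hw := hwin2 (m₁:ℕ) (by omega) hm₁
        rw [holeAdj_int hole (by omega) (by omega)]
        rcases hsep1 (m₂:ℕ) (m₁:ℕ) hm₂ (by omega) hm₁ with h' | h' <;> omega
    · by_cases hm0 : (m₁:ℕ) = 0 <;> by_cases hm0' : (m₂:ℕ) = 0
      · rw [hg20 m₁ hm0, hg20 m₂ hm0']
        constructor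
        · intro h
          exact absurd h (G.loopless.irrefl v)
        · intro h
          omega
      · rw [hg20 m₁ hm0, hg2 m₂ hm0']
        by_cases h1 : (m₂:ℕ) = 1
        · constructor
          · intro _
            exact ⟨rfl, by omega⟩
          · intro _
            have : pos2 (m₂:ℕ) = pos2 1 := by rw [h1]
            rw [this]
            exact hv2 (by omega)
        · constructor
          · intro h
            exact absurd h (hv2' (m₂:ℕ) (by omega) hm₂)
          · intro h
            omega
      · rw [hg2 m₁ hm0, hg20 m₂ hm0']
        by_cases h1 : (m₁:ℕ) = 1
        · constructor
          · intro _
            exact ⟨rfl, by omega⟩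
          · intro _
            have : pos2 (m₁:ℕ) = pos2 1 := by rw [h1]
            rw [this]
            exact (hv2 (by omega)).symm
        · constructor
          · intro h
            exact absurd h.symm (hv2' (m₁:ℕ) (by omega) hm₁)
          · intro h
            omega
      · rw [hg2 m₁ hm0, hg2 m₂ hm0']
        have hw₁ := hwin2 (m₁:ℕ) (by omega) hm₁
        have hw₂ := hwin2 (m₂:ℕ) (by omega) hm₂
        rw [holeAdj_int hole (by omega) (by omega)]
        rcases hmono2 with hm | hm <;> · have := hm (m₁:ℕ) (m₂:ℕ); omega


private lemma natCast_int_eq {n : ℕ} (a : ℕ) : (((a:ℤ)) : ZMod n) = ((a : ℕ) : ZMod n) := by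
  push_cast
  rfl

private lemma workhorse {G : SimpleGraph V} {n k : ℕ} {f : ZMod n → V} (hole : IsHoleEmb G n f)
    {v : V} (hv : v ∉ Set.range f) (hbf : ¬ContainsButterfly G)
    (a1 a2 b1 b2 : ℕ)
    (h1a : 1 ≤ a1) (haa : a1 ≤ a2) (hbb : b1 ≤ b2) (hbn : b2 < n)
    (hgY : a2 + 2 + 2*k ≤ b1) (hgX : b2 + 2 + 2*k ≤ a1 + n)
    (hcard : a1 ≠ a2 ∨ b1 ≠ b2)
    (hA1 : G.Adj v (f ((a1:ℕ) : ZMod n))) (hA2 : G.Adj v (f ((a2:ℕ) : ZMod n)))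
    (hB1 : G.Adj v (f ((b1:ℕ) : ZMod n))) (hB2 : G.Adj v (f ((b2:ℕ) : ZMod n)))
    (hN : ∀ t : ℕ, t < n → G.Adj v (f (t : ZMod n)) → (a1 ≤ t ∧ t ≤ a2) ∨ (b1 ≤ t ∧ t ≤ b2)) :
    ContainsSpider G (k+1) := by
  have hn4 := hole.1
  have hn : 0 < n := by omega
  haveI : NeZero n := ⟨by omega⟩
  -- transfer known adjacencies to ℤ casts
  have hA1' : G.Adj v (f ((a1:ℤ) : ZMod n)) := by rw [natCast_int_eq]; exact hA1
  have hA2' : G.Adj v (f ((a2:ℤ) : ZMod n)) := by rw [natCast_int_eq]; exact hA2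
  have hB1' : G.Adj v (f ((b1:ℤ) : ZMod n)) := by rw [natCast_int_eq]; exact hB1
  have hB2' : G.Adj v (f ((b2:ℤ) : ZMod n)) := by rw [natCast_int_eq]; exact hB2
  -- universal non-adjacency tool
  have hNA : ∀ q : ℤ, -(n:ℤ) ≤ q → q < 2*n →
      (∀ t : ℕ, t < n → ((t:ℤ) = q ∨ (t:ℤ) = q + n ∨ (t:ℤ) = q - n) →
        ¬((a1 ≤ t ∧ t ≤ a2) ∨ (b1 ≤ t ∧ t ≤ b2))) →
      ¬G.Adj v (f (q : ZMod n)) := by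
    intro q hq1 hq2 hblock hadj
    set t : ℕ := (if q < 0 then q + n else if q < n then q else q - n).toNat with ht
    have htq : (t:ℤ) = q ∨ (t:ℤ) = q + n ∨ (t:ℤ) = q - n := by
      rw [ht]
      split_ifs with h1 h2 <;> [right; left; right] <;>
        [left; skip; right] <;> omega
    have htn : t < n := by omega
    have hcast : ((t:ℕ) : ZMod n) = ((q:ℤ) : ZMod n) := by
      rw [← natCast_int_eq]
      rcases htq with h | h | h <;> rw [h] <;> push_cast <;>
        simp [ZMod.natCast_self]
    rw [← hcast] at hadj
    exact hblock t htn htq (hN t htn hadj)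
  have if0 : ∀ x y z : ℤ, (if (0:Fin 3) = 0 then x else if (0:Fin 3) = 1 then y else z) = x := by
    intro x y z; rw [if_pos rfl]
  have if1 : ∀ x y z : ℤ, (if (1:Fin 3) = 0 then x else if (1:Fin 3) = 1 then y else z) = y := by
    intro x y z; rw [if_neg (by decide), if_pos rfl]
  have if2 : ∀ x y z : ℤ, (if (2:Fin 3) = 0 then x else if (2:Fin 3) = 1 then y else z) = z := by
    intro x y z; rw [if_neg (by decide), if_neg (by decide)]
  by_cases hC1 : a1 + 2 ≤ a2
  · -- legs: from a1 downward, from a2 upward, from b1 downward; root v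
    refine shapeI hole hv
      (fun j m => if j = 0 then (a1:ℤ) - m else if j = 1 then (a2:ℤ) + m else (b1:ℤ) - m)
      ((a1:ℤ) - k) ?_ ?_ ?_ ?_ ?_
    · intro j
      have hj : j = 0 ∨ j = 1 ∨ j = 2 := by omega
      rcases hj with rfl | rfl | rfl
      · right; intro m₁ m₂; beta_reduce; rw [if0, if0]; ring
      · left; intro m₁ m₂; beta_reduce; rw [if1, if1]; ring
      · right; intro m₁ m₂; beta_reduce; rw [if2, if2]; ring
    · intro j m hm
      have hj : j = 0 ∨ j = 1 ∨ j = 2 := by omega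
      rcases hj with rfl | rfl | rfl
      · beta_reduce; rw [if0]; omega
      · beta_reduce; rw [if1]; omega
      · beta_reduce; rw [if2]; omega
    · intro j₁ j₂ hne m₁ m₂ hm₁ hm₂
      have hj₁ : j₁ = 0 ∨ j₁ = 1 ∨ j₁ = 2 := by omega
      have hj₂ : j₂ = 0 ∨ j₂ = 1 ∨ j₂ = 2 := by omega
      rcases hj₁ with rfl | rfl | rfl <;> rcases hj₂ with rfl | rfl | rfl <;>
        first
          | exact absurd rfl hne
          | (beta_reduce; rw [if0, if1]; omega) | (beta_reduce; rw [if0, if2]; omega) | (beta_reduce; rw [if1, if0]; omega)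
          | (beta_reduce; rw [if1, if2]; omega) | (beta_reduce; rw [if2, if0]; omega) | (beta_reduce; rw [if2, if1]; omega)
    · intro j
      have hj : j = 0 ∨ j = 1 ∨ j = 2 := by omega
      rcases hj with rfl | rfl | rfl
      · beta_reduce; rw [if0]; norm_num; exact hA1
      · beta_reduce; rw [if1]; norm_num; exact hA2
      · beta_reduce; rw [if2]; norm_num; exact hB1
    · intro j m hm1 hmk
      have hj : j = 0 ∨ j = 1 ∨ j = 2 := by omega
      rcases hj with rfl | rfl | rfl
      · beta_reduce; rw [if0]; exact hNA _ (by omega) (by omega) (by intro t ht hc; omega)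
      · beta_reduce; rw [if1]; exact hNA _ (by omega) (by omega) (by intro t ht hc; omega)
      · beta_reduce; rw [if2]; exact hNA _ (by omega) (by omega) (by intro t ht hc; omega)
  · by_cases hC2 : b1 + 2 ≤ b2
    · -- legs: a1 down, b1 down, b2 up; root v
      refine shapeI hole hv
        (fun j m => if j = 0 then (a1:ℤ) - m else if j = 1 then (b1:ℤ) - m else (b2:ℤ) + m)
        ((a1:ℤ) - k) ?_ ?_ ?_ ?_ ?_
      · intro j
        have hj : j = 0 ∨ j = 1 ∨ j = 2 := by omega
        rcases hj with rfl | rfl | rfl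
        · right; intro m₁ m₂; beta_reduce; rw [if0, if0]; ring
        · right; intro m₁ m₂; beta_reduce; rw [if1, if1]; ring
        · left; intro m₁ m₂; beta_reduce; rw [if2, if2]; ring
      · intro j m hm
        have hj : j = 0 ∨ j = 1 ∨ j = 2 := by omega
        rcases hj with rfl | rfl | rfl
        · beta_reduce; rw [if0]; omega
        · beta_reduce; rw [if1]; omega
        · beta_reduce; rw [if2]; omega
      · intro j₁ j₂ hne m₁ m₂ hm₁ hm₂
        have hj₁ : j₁ = 0 ∨ j₁ = 1 ∨ j₁ = 2 := by omega
        have hj₂ : j₂ = 0 ∨ j₂ = 1 ∨ j₂ = 2 := by omega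
        rcases hj₁ with rfl | rfl | rfl <;> rcases hj₂ with rfl | rfl | rfl <;>
          first
            | exact absurd rfl hne
            | (beta_reduce; rw [if0, if1]; omega) | (beta_reduce; rw [if0, if2]; omega)
            | (beta_reduce; rw [if1, if0]; omega) | (beta_reduce; rw [if1, if2]; omega)
            | (beta_reduce; rw [if2, if0]; omega) | (beta_reduce; rw [if2, if1]; omega)
      · intro j
        have hj : j = 0 ∨ j = 1 ∨ j = 2 := by omega
        rcases hj with rfl | rfl | rfl
        · beta_reduce; rw [if0]; norm_num; exact hA1
        · beta_reduce; rw [if1]; norm_num; exact hB1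
        · beta_reduce; rw [if2]; norm_num; exact hB2
      · intro j m hm1 hmk
        have hj : j = 0 ∨ j = 1 ∨ j = 2 := by omega
        rcases hj with rfl | rfl | rfl
        · beta_reduce; rw [if0]; exact hNA _ (by omega) (by omega) (by intro t ht hc; omega)
        · beta_reduce; rw [if1]; exact hNA _ (by omega) (by omega) (by intro t ht hc; omega)
        · beta_reduce; rw [if2]; exact hNA _ (by omega) (by omega) (by intro t ht hc; omega)
    · -- now both neighbourhood blocks are single vertices or edges
      by_cases hA2e : a2 = a1 + 1 <;> by_cases hB2e : b2 = b1 + 1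
      · -- butterfly: contradiction
        exfalso
        apply hbf
        refine ⟨n, f, v, hole, hv, ((a1:ℕ) : ZMod n), ((b1:ℕ) : ZMod n), ?_, ?_, ?_, ?_, ?_, ?_, ?_⟩
        · intro h
          rw [← natCast_int_eq a1, ← natCast_int_eq b1] at h
          have := (castEq_iff hn (by omega) (by omega)).1 h
          omega
        · rw [show (((b1:ℕ) : ZMod n) + 1) = (((b1+1:ℕ)) : ZMod n) by push_cast; ring]
          intro h
          rw [← natCast_int_eq a1, ← natCast_int_eq (b1+1)] at h
          have := (castEq_iff hn (by omega) (by omega)).1 h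
          omega
        · rw [show (((a1:ℕ) : ZMod n) + 1) = (((a1+1:ℕ)) : ZMod n) by push_cast; ring]
          intro h
          rw [← natCast_int_eq (a1+1), ← natCast_int_eq b1] at h
          have := (castEq_iff hn (by omega) (by omega)).1 h
          omega
        · rw [show (((a1:ℕ) : ZMod n) + 1) = (((a1+1:ℕ)) : ZMod n) by push_cast; ring,
              show (((b1:ℕ) : ZMod n) + 1) = (((b1+1:ℕ)) : ZMod n) by push_cast; ring]
          intro h
          rw [← natCast_int_eq (a1+1), ← natCast_int_eq (b1+1)] at h
          have := (castEq_iff hn (by omega) (by omega)).1 h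
          omega
        · rw [show (((a1:ℕ) : ZMod n) + 1) = (((a1+1:ℕ)) : ZMod n) by push_cast; ring,
              ← natCast_int_eq (a1+1), ← natCast_int_eq b1,
              holeAdj_int hole (by omega) (by omega)]
          omega
        · rw [show (((b1:ℕ) : ZMod n) + 1) = (((b1+1:ℕ)) : ZMod n) by push_cast; ring,
              ← natCast_int_eq (b1+1), ← natCast_int_eq a1,
              holeAdj_int hole (by omega) (by omega)]
          omega
        · intro m
          constructor
          · intro h
            have hval : m = ((m.val : ℕ) : ZMod n) := (ZMod.natCast_rightInverse m).symm
            rw [hval] at h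
            have hb := hN m.val (ZMod.val_lt m) h
            have : m.val = a1 ∨ m.val = a1 + 1 ∨ m.val = b1 ∨ m.val = b1 + 1 := by omega
            rcases this with h' | h' | h' | h'
            · left; rw [hval, h']
            · right; left; rw [hval, h']; push_cast; ring
            · right; right; left; rw [hval, h']
            · right; right; right; rw [hval, h']; push_cast; ring
          · intro h
            rcases h with h | h | h | h <;> rw [h]
            · exact hA1
            · rw [show (((a1:ℕ) : ZMod n) + 1) = (((a2:ℕ)) : ZMod n) by
                rw [hA2e]; push_cast; ring]
              exact hA2
            · exact hB1
            · rw [show (((b1:ℕ) : ZMod n) + 1) = (((b2:ℕ)) : ZMod n) by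
                rw [hB2e]; push_cast; ring]
              exact hB2
      · -- C3 : neighbourhood is {a1, a1+1, b1}; root f b1
        have hb2 : b2 = b1 := by omega
        refine shapeII hole hv ((b1:ℕ):ℤ) (fun m => (a1:ℤ) + m) ((a1:ℤ) + 1 - k)
          ?_ ?_ ?_ ?_ ?_ ?_ ?_ ?_ ?_ ?_ ?_
        · left; intro m₁ m₂; beta_reduce; push_cast; ring
        · constructor <;> push_cast <;> omega
        · intro m h1 h2; beta_reduce; push_cast; omega
        · intro m₁ m₂ h1 h2 h3; beta_reduce; push_cast; omega
        · intro m₁ m₂ h1 h2 h3; beta_reduce; push_cast; omega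
        · intro m h1 h2; beta_reduce; push_cast; omega
        · exact hB1'
        · intro m hm
          exact hNA _ (by push_cast; omega) (by push_cast; omega) (by intro t ht hc; omega)
        · intro m hm
          exact hNA _ (by push_cast; omega) (by push_cast; omega) (by intro t ht hc; omega)
        · intro hk
          beta_reduce
          rw [show ((a1:ℤ) + ((1:ℕ):ℤ)) = ((a2 : ℕ) : ℤ) by push_cast; omega, natCast_int_eq]
          exact hA2
        · intro m hm2 hmk
          beta_reduce
          exact hNA _ (by omega) (by omega) (by intro t ht hc; omega)
      · -- C4 : neighbourhood is {a1, b1, b1+1}; root f a1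
        have ha2 : a2 = a1 := by omega
        refine shapeII hole hv ((a1:ℕ):ℤ) (fun m => (b1:ℤ) + 1 - m) ((a1:ℤ) - 1 - k)
          ?_ ?_ ?_ ?_ ?_ ?_ ?_ ?_ ?_ ?_ ?_
        · right; intro m₁ m₂; beta_reduce; push_cast; ring
        · constructor <;> push_cast <;> omega
        · intro m h1 h2; beta_reduce; push_cast; omega
        · intro m₁ m₂ h1 h2 h3; beta_reduce; push_cast; omega
        · intro m₁ m₂ h1 h2 h3; beta_reduce; push_cast; omega
        · intro m h1 h2; beta_reduce; push_cast; omega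
        · exact hA1'
        · intro m hm
          exact hNA _ (by push_cast; omega) (by push_cast; omega) (by intro t ht hc; omega)
        · intro m hm
          exact hNA _ (by push_cast; omega) (by push_cast; omega) (by intro t ht hc; omega)
        · intro hk
          beta_reduce
          rw [show ((b1:ℤ) + 1 - ((1:ℕ):ℤ)) = ((b1 : ℕ) : ℤ) by push_cast; omega, natCast_int_eq]
          exact hB1
        · intro m hm2 hmk
          beta_reduce
          exact hNA _ (by omega) (by omega) (by intro t ht hc; omega)
      · exfalso; omega


-- X-side counting: distinguished index K at top
private lemma count_lemmaX (K p n : ℕ) (A B : ℕ → Finset ℕ)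
    (hAsub : ∀ i, i ≤ K → A i ⊆ Finset.Ico 1 p)
    (hBsub : ∀ i, i ≤ K → B i ⊆ Finset.Ioo p n)
    (hAne : ∀ i, i ≤ K → (A i).Nonempty)
    (hBne : ∀ i, i ≤ K → (B i).Nonempty)
    (h3 : ∀ i, i < K → 3 ≤ (A i).card + (B i).card)
    (hordA : ∀ i j, i < j → j ≤ K → ∀ t₁ ∈ A i, ∀ t₂ ∈ A j, t₁ ≤ t₂)
    (hordB : ∀ i j, i < j → j ≤ K → ∀ t₁ ∈ B i, ∀ t₂ ∈ B j, t₂ ≤ t₁)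
    (a1 b2 : ℕ) (ha1A : a1 ∈ A K) (hb2B : b2 ∈ B K) :
    K + b2 + 2 ≤ a1 + n := by
  classical
  have ha1p : 1 ≤ a1 ∧ a1 < p := Finset.mem_Ico.1 (hAsub K le_rfl ha1A)
  have hb2p : p < b2 ∧ b2 < n := Finset.mem_Ioo.1 (hBsub K le_rfl hb2B)
  set ψ : ℕ → ℕ := fun i =>
    if h : i < K then
      (if 2 ≤ (A i).card then (A i).min' (hAne i (le_of_lt h))
       else (B i).max' (hBne i (le_of_lt h)))
    else 0 with hψ
  have key : ∀ i (hi : i < K),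
      (2 ≤ (A i).card ∧ ψ i = (A i).min' (hAne i (le_of_lt hi)) ∧
        1 ≤ ψ i ∧ ψ i < a1 ∧ (A i).max' (hAne i (le_of_lt hi)) ≤ a1 ∧
        ψ i < (A i).max' (hAne i (le_of_lt hi))) ∨
      (¬(2 ≤ (A i).card) ∧ ψ i = (B i).max' (hBne i (le_of_lt hi)) ∧
        b2 < ψ i ∧ ψ i < n ∧ b2 ≤ (B i).min' (hBne i (le_of_lt hi)) ∧
        (B i).min' (hBne i (le_of_lt hi)) < ψ i) := by
    intro i hi
    by_cases h2 : 2 ≤ (A i).card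
    · left
      have hψi : ψ i = (A i).min' (hAne i (le_of_lt hi)) := by
        rw [hψ]; beta_reduce; rw [dif_pos hi, if_pos h2]
      have hlt : (A i).min' (hAne i (le_of_lt hi)) < (A i).max' (hAne i (le_of_lt hi)) :=
        Finset.min'_lt_max'_of_card _ (by omega)
      have hle : (A i).max' (hAne i (le_of_lt hi)) ≤ a1 :=
        hordA i K hi le_rfl _ (Finset.max'_mem _ _) _ ha1A
      have h1 : 1 ≤ (A i).min' (hAne i (le_of_lt hi)) :=
        (Finset.mem_Ico.1 (hAsub i (le_of_lt hi) (Finset.min'_mem _ _))).1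
      exact ⟨h2, hψi, by omega, by omega, hle, by omega⟩
    · right
      have h2B : 2 ≤ (B i).card := by have := h3 i hi; omega
      have hψi : ψ i = (B i).max' (hBne i (le_of_lt hi)) := by
        rw [hψ]; beta_reduce; rw [dif_pos hi, if_neg h2]
      have hlt : (B i).min' (hBne i (le_of_lt hi)) < (B i).max' (hBne i (le_of_lt hi)) :=
        Finset.min'_lt_max'_of_card _ (by omega)
      have hle : b2 ≤ (B i).min' (hBne i (le_of_lt hi)) :=
        hordB i K hi le_rfl _ (Finset.min'_mem _ _) _ hb2B
      have h1 : (B i).max' (hBne i (le_of_lt hi)) < n :=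
        (Finset.mem_Ioo.1 (hBsub i (le_of_lt hi) (Finset.max'_mem _ _))).2
      exact ⟨h2, hψi, by omega, by omega, hle, by omega⟩
  have hmem : ∀ i ∈ Finset.range K, ψ i ∈ Finset.Ico 1 a1 ∪ Finset.Ioo b2 n := by
    intro i hi
    have hi' := Finset.mem_range.1 hi
    rcases key i hi' with ⟨_, _, h1, h2, _, _⟩ | ⟨_, _, h1, h2, _, _⟩
    · exact Finset.mem_union_left _ (Finset.mem_Ico.2 ⟨h1, h2⟩)
    · exact Finset.mem_union_right _ (Finset.mem_Ioo.2 ⟨h1, h2⟩)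
  have hne : ∀ i j, i < j → j < K → ψ i ≠ ψ j := by
    intro i j hij hj
    have hi : i < K := by omega
    rcases key i hi with ⟨hc1, he1, _, _, _, hx1⟩ | ⟨hc1, he1, hx1, _, hy1, _⟩ <;>
      rcases key j hj with ⟨hc2, he2, hx2, hy2, _, _⟩ | ⟨hc2, he2, hx2, _, _, hz2⟩
    · -- A, A : ψ i < maxA i ≤ minA j = ψ j
      have : (A i).max' (hAne i (le_of_lt hi)) ≤ (A j).min' (hAne j (le_of_lt hj)) :=
        hordA i j hij (le_of_lt hj) _ (Finset.max'_mem _ _) _ (Finset.min'_mem _ _)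
      omega
    · -- A, B : ψ i < a1 ≤ p < b2 < ψ j
      omega
    · -- B, A : ψ i > b2 > p > a1 > ψ j
      omega
    · -- B, B : ψ j = maxB j ≤ minB i < ψ i
      have : (B j).max' (hBne j (le_of_lt hj)) ≤ (B i).min' (hBne i (le_of_lt hi)) :=
        hordB i j hij (le_of_lt hj) _ (Finset.min'_mem _ _) _ (Finset.max'_mem _ _)
      omega
  have hinj : Set.InjOn ψ (Finset.range K) := by
    intro x hx y hy hxy
    rcases lt_trichotomy x y with h | h | h
    · exact absurd hxy (hne x y h (Finset.mem_range.1 (by simpa using hy)))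
    · exact h
    · exact absurd hxy.symm (hne y x h (Finset.mem_range.1 (by simpa using hx)))
  have hcard := Finset.card_le_card_of_injOn ψ hmem hinj
  have hdisj : Disjoint (Finset.Ico 1 a1) (Finset.Ioo b2 n) := by
    rw [Finset.disjoint_left]
    intro t ht1 ht2
    rw [Finset.mem_Ico] at ht1
    rw [Finset.mem_Ioo] at ht2
    omega
  rw [Finset.card_range, Finset.card_union_of_disjoint hdisj, Nat.card_Ico, Nat.card_Ioo] at hcard
  omega

-- Y-side counting: distinguished index 0 at bottom
private lemma count_lemmaY (K p n : ℕ) (A B : ℕ → Finset ℕ)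
    (hAsub : ∀ i, i ≤ K → A i ⊆ Finset.Ico 1 p)
    (hBsub : ∀ i, i ≤ K → B i ⊆ Finset.Ioo p n)
    (hAne : ∀ i, i ≤ K → (A i).Nonempty)
    (hBne : ∀ i, i ≤ K → (B i).Nonempty)
    (h3 : ∀ i, 1 ≤ i → i ≤ K → 3 ≤ (A i).card + (B i).card)
    (hordA : ∀ i j, i < j → j ≤ K → ∀ t₁ ∈ A i, ∀ t₂ ∈ A j, t₁ ≤ t₂)
    (hordB : ∀ i j, i < j → j ≤ K → ∀ t₁ ∈ B i, ∀ t₂ ∈ B j, t₂ ≤ t₁)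
    (a2 b1 : ℕ) (ha2A : a2 ∈ A 0) (hb1B : b1 ∈ B 0) :
    K + a2 + 2 ≤ b1 := by
  classical
  have ha2p : 1 ≤ a2 ∧ a2 < p := Finset.mem_Ico.1 (hAsub 0 (by omega) ha2A)
  have hb1p : p < b1 ∧ b1 < n := Finset.mem_Ioo.1 (hBsub 0 (by omega) hb1B)
  set ψ : ℕ → ℕ := fun i =>
    if h : 1 ≤ i ∧ i ≤ K then
      (if 2 ≤ (A i).card then (A i).max' (hAne i h.2)
       else (B i).min' (hBne i h.2))
    else 0 with hψ
  have key : ∀ i (h1i : 1 ≤ i) (hiK : i ≤ K),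
      (2 ≤ (A i).card ∧ ψ i = (A i).max' (hAne i hiK) ∧
        a2 < ψ i ∧ ψ i < p ∧ (A i).min' (hAne i hiK) < ψ i ∧
        a2 ≤ (A i).min' (hAne i hiK)) ∨
      (¬(2 ≤ (A i).card) ∧ ψ i = (B i).min' (hBne i hiK) ∧
        p < ψ i ∧ ψ i < b1 ∧ ψ i < (B i).max' (hBne i hiK) ∧
        (B i).max' (hBne i hiK) ≤ b1) := by
    intro i h1i hiK
    by_cases h2 : 2 ≤ (A i).card
    · left
      have hψi : ψ i = (A i).max' (hAne i hiK) := by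
        rw [hψ]; beta_reduce; rw [dif_pos ⟨h1i, hiK⟩, if_pos h2]
      have hlt : (A i).min' (hAne i hiK) < (A i).max' (hAne i hiK) :=
        Finset.min'_lt_max'_of_card _ (by omega)
      have hle : a2 ≤ (A i).min' (hAne i hiK) :=
        hordA 0 i h1i hiK _ ha2A _ (Finset.min'_mem _ _)
      have h1 : (A i).max' (hAne i hiK) < p :=
        (Finset.mem_Ico.1 (hAsub i hiK (Finset.max'_mem _ _))).2
      exact ⟨h2, hψi, by omega, by omega, by omega, hle⟩
    · right
      have h2B : 2 ≤ (B i).card := by have := h3 i h1i hiK; omega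
      have hψi : ψ i = (B i).min' (hBne i hiK) := by
        rw [hψ]; beta_reduce; rw [dif_pos ⟨h1i, hiK⟩, if_neg h2]
      have hlt : (B i).min' (hBne i hiK) < (B i).max' (hBne i hiK) :=
        Finset.min'_lt_max'_of_card _ (by omega)
      have hle : (B i).max' (hBne i hiK) ≤ b1 :=
        hordB 0 i h1i hiK _ hb1B _ (Finset.max'_mem _ _)
      have h1 : p < (B i).min' (hBne i hiK) :=
        (Finset.mem_Ioo.1 (hBsub i hiK (Finset.min'_mem _ _))).1
      exact ⟨h2, hψi, by omega, by omega, by omega, hle⟩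
  have hmem : ∀ i ∈ Finset.Icc 1 K, ψ i ∈ Finset.Ioo a2 p ∪ Finset.Ioo p b1 := by
    intro i hi
    obtain ⟨h1i, hiK⟩ := Finset.mem_Icc.1 hi
    rcases key i h1i hiK with ⟨_, _, h1, h2, _, _⟩ | ⟨_, _, h1, h2, _, _⟩
    · exact Finset.mem_union_left _ (Finset.mem_Ioo.2 ⟨h1, h2⟩)
    · exact Finset.mem_union_right _ (Finset.mem_Ioo.2 ⟨h1, h2⟩)
  have hne : ∀ i j, 1 ≤ i → i < j → j ≤ K → ψ i ≠ ψ j := by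
    intro i j h1i hij hj
    have hiK : i ≤ K := by omega
    rcases key i h1i hiK with ⟨hc1, he1, _, _, _, _⟩ | ⟨hc1, he1, _, _, hx1, _⟩ <;>
      rcases key j (by omega) hj with ⟨hc2, he2, _, _, hx2, hy2⟩ | ⟨hc2, he2, hx2, _, _, _⟩
    · -- A, A : ψ i = maxA i ≤ minA j < ψ j
      have : (A i).max' (hAne i hiK) ≤ (A j).min' (hAne j hj) :=
        hordA i j hij hj _ (Finset.max'_mem _ _) _ (Finset.min'_mem _ _)
      omega
    · omega
    · omega
    · -- B, B : ψ j = minB j < maxB j ≤ minB i = ψ i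
      have : (B j).max' (hBne j hj) ≤ (B i).min' (hBne i hiK) :=
        hordB i j hij hj _ (Finset.min'_mem _ _) _ (Finset.max'_mem _ _)
      omega
  have hinj : Set.InjOn ψ (Finset.Icc 1 K) := by
    intro x hx y hy hxy
    have hx' := Finset.mem_Icc.1 (by simpa using hx)
    have hy' := Finset.mem_Icc.1 (by simpa using hy)
    rcases lt_trichotomy x y with h | h | h
    · exact absurd hxy (hne x y hx'.1 h hy'.2)
    · exact h
    · exact absurd hxy.symm (hne y x hy'.1 h hx'.2)
  have hcard := Finset.card_le_card_of_injOn ψ hmem hinj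
  have hdisj : Disjoint (Finset.Ioo a2 p) (Finset.Ioo p b1) := by
    rw [Finset.disjoint_left]
    intro t ht1 ht2
    rw [Finset.mem_Ioo] at ht1
    rw [Finset.mem_Ioo] at ht2
    omega
  rw [Nat.card_Icc, Finset.card_union_of_disjoint hdisj, Nat.card_Ioo, Nat.card_Ioo] at hcard
  omega

/-- If a butterfly-free graph contains a `(4k+1)`-span-wheel (`k ≥ 0`),
then it contains `S_{k+1,k+1,k+1}` as an induced subgraph. -/
theorem statement12 (G : SimpleGraph V) (k : ℕ) (hbf : ¬ContainsButterfly G)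
    (hsw : ∃ (n p : ℕ) (f : ZMod n → V) (c : Fin (4 * k + 1) → V),
      IsSpanWheel G (4 * k + 1) n p f c) :
    ContainsSpider G (k + 1) := by
  classical
  obtain ⟨n, p, f, c, hole, hp2, hpn, hxy, hcinj, hcrange, hcc, hcx, hcy, hcard3,
    hintA, hintB, hordA, hordB⟩ := hsw
  have hn4 : 4 ≤ n := hole.1
  have hn : 0 < n := by omega
  haveI : NeZero n := ⟨by omega⟩
  have hpn' : p + 2 ≤ n := by omega
  -- the A- and B-side neighbour position sets of each centre
  set A : Fin (4*k+1) → Finset ℕ :=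
    fun w => (Finset.Ico 1 p).filter (fun t => G.Adj (c w) (f (t:ZMod n))) with hA
  set B : Fin (4*k+1) → Finset ℕ :=
    fun w => (Finset.Ioo p n).filter (fun t => G.Adj (c w) (f (t:ZMod n))) with hB
  have hmemA : ∀ w t, t ∈ A w ↔ (1 ≤ t ∧ t < p ∧ G.Adj (c w) (f (t:ZMod n))) := by
    intro w t
    rw [hA]; beta_reduce
    rw [Finset.mem_filter, Finset.mem_Ico]
    tauto
  have hmemB : ∀ w t, t ∈ B w ↔ (p < t ∧ t < n ∧ G.Adj (c w) (f (t:ZMod n))) := by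
    intro w t
    rw [hB]; beta_reduce
    rw [Finset.mem_filter, Finset.mem_Ioo]
    tauto
  have hAne : ∀ w, (A w).Nonempty := by
    intro w
    obtain ⟨a, h1, h2, h3⟩ := hintA w
    exact ⟨a, (hmemA w a).2 ⟨by omega, h2, h3⟩⟩
  have hBne : ∀ w, (B w).Nonempty := by
    intro w
    obtain ⟨b, h1, h2, h3⟩ := hintB w
    exact ⟨b, (hmemB w b).2 ⟨h1, h2, h3⟩⟩
  -- each centre has at least 3 neighbours on the hole, all in A ∪ B
  have hA3 : ∀ w, 3 ≤ (A w).card + (B w).card := by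
    intro w
    obtain ⟨T, hTsub, hT3⟩ := Set.exists_subset_card_eq (hcard3 w)
    rw [Set.ncard_eq_three] at hT3
    obtain ⟨x, y, z, hxy, hxz, hyz, rfl⟩ := hT3
    have hx : G.Adj (c w) (f x) := hTsub (by simp)
    have hy : G.Adj (c w) (f y) := hTsub (by simp)
    have hz : G.Adj (c w) (f z) := hTsub (by simp)
    have key : ∀ m : ZMod n, G.Adj (c w) (f m) → m.val ∈ A w ∪ B w := by
      intro m hm
      have hval : ((m.val : ℕ) : ZMod n) = m := ZMod.natCast_rightInverse m
      have hlt : m.val < n := ZMod.val_lt m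
      have h0 : m.val ≠ 0 := by
        intro h
        apply hcx w
        have : m = 0 := by rw [← hval, h]; simp
        rwa [this] at hm
      have hp0 : m.val ≠ p := by
        intro h
        apply hcy w
        have : m = ((p:ℕ) : ZMod n) := by rw [← hval, h]
        rwa [this] at hm
      rcases Nat.lt_or_ge m.val p with h | h
      · exact Finset.mem_union_left _ ((hmemA w m.val).2 ⟨by omega, h, by rwa [hval]⟩)
      · exact Finset.mem_union_right _ ((hmemB w m.val).2 ⟨by omega, hlt, by rwa [hval]⟩)
    have hvalinj : ∀ m₁ m₂ : ZMod n, m₁.val = m₂.val → m₁ = m₂ := by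
      intro m₁ m₂ h
      rw [← ZMod.natCast_rightInverse m₁, ← ZMod.natCast_rightInverse m₂, h]
    have hsub : ({x.val, y.val, z.val} : Finset ℕ) ⊆ A w ∪ B w := by
      intro t ht
      simp only [Finset.mem_insert, Finset.mem_singleton] at ht
      rcases ht with rfl | rfl | rfl
      · exact key x hx
      · exact key y hy
      · exact key z hz
    have hcard3' : ({x.val, y.val, z.val} : Finset ℕ).card = 3 := by
      rw [Finset.card_insert_of_notMem, Finset.card_insert_of_notMem, Finset.card_singleton]
      · simp only [Finset.mem_singleton]
        intro h; exact hyz (hvalinj _ _ h)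
      · simp only [Finset.mem_insert, Finset.mem_singleton]
        rintro (h | h)
        · exact hxy (hvalinj _ _ h)
        · exact hxz (hvalinj _ _ h)
    have hdisj : Disjoint (A w) (B w) := by
      rw [Finset.disjoint_left]
      intro t ht1 ht2
      rw [hmemA] at ht1
      rw [hmemB] at ht2
      omega
    calc 3 = ({x.val, y.val, z.val} : Finset ℕ).card := hcard3'.symm
      _ ≤ (A w ∪ B w).card := Finset.card_le_card hsub
      _ = (A w).card + (B w).card := Finset.card_union_of_disjoint hdisj
  -- ordering of neighbourhoods along the two paths
  have hordA' : ∀ (w₁ w₂ : Fin (4*k+1)), w₁ < w₂ → ∀ t₁ ∈ A w₁, ∀ t₂ ∈ A w₂, t₁ ≤ t₂ := by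
    intro w₁ w₂ hlt t₁ h₁ t₂ h₂
    rw [hmemA] at h₁ h₂
    exact hordA w₁ w₂ hlt t₁ t₂ (by omega) (by omega) h₁.2.2 h₂.2.2
  have hordB' : ∀ (w₁ w₂ : Fin (4*k+1)), w₁ < w₂ → ∀ t₁ ∈ B w₁, ∀ t₂ ∈ B w₂, t₂ ≤ t₁ := by
    intro w₁ w₂ hlt t₁ h₁ t₂ h₂
    rw [hmemB] at h₁ h₂
    exact hordB w₁ w₂ hlt t₁ t₂ (by omega) (by omega) (by omega) (by omega) h₁.2.2 h₂.2.2
  -- the middle centre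
  set vidx : Fin (4*k+1) := ⟨2*k, by omega⟩ with hvidx
  set v : V := c vidx with hvdef
  set a1 := (A vidx).min' (hAne vidx) with ha1
  set a2 := (A vidx).max' (hAne vidx) with ha2
  set b1 := (B vidx).min' (hBne vidx) with hb1
  set b2 := (B vidx).max' (hBne vidx) with hb2
  have ha1m := (hmemA vidx a1).1 (Finset.min'_mem _ _)
  have ha2m := (hmemA vidx a2).1 (Finset.max'_mem _ _)
  have hb1m := (hmemB vidx b1).1 (Finset.min'_mem _ _)
  have hb2m := (hmemB vidx b2).1 (Finset.max'_mem _ _)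
  -- X-side gap
  have hvidxX : ∀ (h : min (2*k) (2*k) < 4*k+1), (⟨min (2*k) (2*k), h⟩ : Fin (4*k+1)) = vidx := by
    intro h
    apply Fin.ext
    simp [hvidx]
  have hvidxY : ∀ (h : 2*k + min 0 (2*k) < 4*k+1), (⟨2*k + min 0 (2*k), h⟩ : Fin (4*k+1)) = vidx := by
    intro h
    apply Fin.ext
    simp [hvidx]
  have hgX : b2 + 2 + 2*k ≤ a1 + n := by
    have := count_lemmaX (2*k) p n
      (fun i => A ⟨min i (2*k), by omega⟩) (fun i => B ⟨min i (2*k), by omega⟩)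
      (fun i hi t ht => by
        rw [hmemA] at ht
        exact Finset.mem_Ico.2 ⟨by omega, by omega⟩)
      (fun i hi t ht => by
        rw [hmemB] at ht
        exact Finset.mem_Ioo.2 ⟨by omega, by omega⟩)
      (fun i hi => hAne _) (fun i hi => hBne _)
      (fun i hi => hA3 _)
      (fun i j hij hj t₁ h₁ t₂ h₂ => by
        refine hordA' _ _ ?_ t₁ h₁ t₂ h₂
        show min i (2*k) < min j (2*k)
        omega)
      (fun i j hij hj t₁ h₁ t₂ h₂ => by
        refine hordB' _ _ ?_ t₁ h₁ t₂ h₂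
        show min i (2*k) < min j (2*k)
        omega)
      a1 b2
      (by beta_reduce; rw [hvidxX]; exact Finset.min'_mem _ _)
      (by beta_reduce; rw [hvidxX]; exact Finset.max'_mem _ _)
    omega
  -- Y-side gap
  have hgY : a2 + 2 + 2*k ≤ b1 := by
    have := count_lemmaY (2*k) p n
      (fun i => A ⟨2*k + min i (2*k), by omega⟩) (fun i => B ⟨2*k + min i (2*k), by omega⟩)
      (fun i hi t ht => by
        rw [hmemA] at ht
        exact Finset.mem_Ico.2 ⟨by omega, by omega⟩)
      (fun i hi t ht => by
        rw [hmemB] at ht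
        exact Finset.mem_Ioo.2 ⟨by omega, by omega⟩)
      (fun i hi => hAne _) (fun i hi => hBne _)
      (fun i h1i hi => hA3 _)
      (fun i j hij hj t₁ h₁ t₂ h₂ => by
        refine hordA' _ _ ?_ t₁ h₁ t₂ h₂
        show 2*k + min i (2*k) < 2*k + min j (2*k)
        omega)
      (fun i j hij hj t₁ h₁ t₂ h₂ => by
        refine hordB' _ _ ?_ t₁ h₁ t₂ h₂
        show 2*k + min i (2*k) < 2*k + min j (2*k)
        omega)
      a2 b1
      (by beta_reduce; rw [hvidxY]; exact Finset.max'_mem _ _)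
      (by beta_reduce; rw [hvidxY]; exact Finset.min'_mem _ _)
    omega
  -- remaining hypotheses of the workhorse
  have hcardne : a1 ≠ a2 ∨ b1 ≠ b2 := by
    by_contra h
    push_neg at h
    obtain ⟨h1, h2⟩ := h
    have cA : (A vidx).card ≤ 1 := Finset.card_le_one.2 (fun x hx y hy => by
      have hx1 := Finset.min'_le _ x hx
      have hx2 := Finset.le_max' _ x hx
      have hy1 := Finset.min'_le _ y hy
      have hy2 := Finset.le_max' _ y hy
      omega)
    have cB : (B vidx).card ≤ 1 := Finset.card_le_one.2 (fun x hx y hy => by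
      have hx1 := Finset.min'_le _ x hx
      have hx2 := Finset.le_max' _ x hx
      have hy1 := Finset.min'_le _ y hy
      have hy2 := Finset.le_max' _ y hy
      omega)
    have := hA3 vidx
    omega
  have hN : ∀ t : ℕ, t < n → G.Adj v (f (t : ZMod n)) →
      (a1 ≤ t ∧ t ≤ a2) ∨ (b1 ≤ t ∧ t ≤ b2) := by
    intro t ht hadj
    rcases Nat.lt_trichotomy t p with h | h | h
    · rcases Nat.eq_zero_or_pos t with rfl | h0
      · exfalso
        apply hcx vidx
        rwa [Nat.cast_zero] at hadj
      · have htA : t ∈ A vidx := (hmemA vidx t).2 ⟨h0, h, hadj⟩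
        exact Or.inl ⟨Finset.min'_le _ t htA, Finset.le_max' _ t htA⟩
    · exfalso
      apply hcy vidx
      rw [h] at hadj
      exact hadj
    · have htB : t ∈ B vidx := (hmemB vidx t).2 ⟨h, ht, hadj⟩
      exact Or.inr ⟨Finset.min'_le _ t htB, Finset.le_max' _ t htB⟩
  exact workhorse hole (hcrange vidx) hbf a1 a2 b1 b2
    (by omega) (Finset.min'_le _ _ (Finset.max'_mem _ _)) (Finset.min'_le _ _ (Finset.max'_mem _ _))
    (by omega) hgY hgX hcardne
    ha1m.2.2 ha2m.2.2 hb1m.2.2 hb2m.2.2 hN
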